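/- For all nonnegative integers m and n, the probabilistic bivariate Bell polynomials satisfy the recurrence φ_{m+n}^Y(x,y) = Σ_{k=0}^{n} Σ_{j=0}^{m} C(m,j) · φ_j^Y(x−k, y) · (x)_k · y^k · (1/k!) · Σ_{l_1+⋯+l_k=n, l_i≥1} (n!/(l_1!⋯l_k!)) · E[S_k^{m−j} · ∏_{i=1}^{k} Y_i^{l_i}], where the inner sum is over all k-tuples (l_1,…,l_k) of positive integers with l_1+⋯+l_k = n (the empty sum for k=0 being nonzero only when n=0, in which case it equals 1). -/

import Mathlib

open MeasureTheory ProbabilityTheory Finset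

noncomputable section

variable {Ω : Type*} [MeasureSpace Ω]

/-- The falling factorial `(x)_k = x (x-1) ⋯ (x-k+1)`. -/
def fallFac (x : ℝ) (k : ℕ) : ℝ := ∏ i ∈ Finset.range k, (x - (i : ℝ))

/-- Partial sums `S_k = Y_1 + ⋯ + Y_k` (with `S_0 = 0`). -/
def S (Y : ℕ → Ω → ℝ) (k : ℕ) (ω : Ω) : ℝ := ∑ i ∈ Finset.range k, Y i ω

/-- The probabilistic Stirling numbers of the second kind associated with `Y`:
`{n brace k}_Y = (1/k!) ∑_{i=0}^{k} C(k,i) (−1)^{k−i} E[S_i^n]`. -/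
def probStirling (Y : ℕ → Ω → ℝ) (n k : ℕ) : ℝ :=
  ((k.factorial : ℝ))⁻¹ *
    ∑ i ∈ Finset.range (k + 1), (k.choose i : ℝ) * (-1) ^ (k - i) * ∫ ω, (S Y i ω) ^ n

/-- The probabilistic bivariate Bell polynomials associated with `Y`:
`φ_n^Y(x,y) = ∑_{k=0}^{n} {n brace k}_Y (x)_k y^k`. -/
def phiBiv (Y : ℕ → Ω → ℝ) (n : ℕ) (x y : ℝ) : ℝ :=
  ∑ k ∈ Finset.range (n + 1), probStirling Y n k * fallFac x k * y ^ k

/-- k-tuples of positive integers summing to `j`. -/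
def posTuples (k j : ℕ) : Finset (Fin k → ℕ) :=
  (Finset.Nat.antidiagonalTuple k j).filter fun l => ∀ i, 0 < l i

/-! ### Auxiliary combinatorial definitions and lemmas -/



def Aset {α : Type*} [DecidableEq α] (μ : ℕ → ℝ) (B : Finset α) (r : ℕ) (g : α → ℕ) : ℝ :=
  ∑ u ∈ B.piAntidiag r, (Nat.multinomial B u : ℝ) * ∏ a ∈ B, μ (u a + g a)

lemma multinomial_congr_subset {α : Type*} (A B : Finset α) (hAB : A ⊆ B) (v : α → ℕ)
    (hv : ∀ a ∈ B, a ∉ A → v a = 0) : Nat.multinomial B v = Nat.multinomial A v := by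
  have h1 : ∏ a ∈ B, (v a).factorial = ∏ a ∈ A, (v a).factorial := by
    refine (Finset.prod_subset hAB fun a ha hna => ?_).symm
    rw [hv a ha hna]; rfl
  have h2 : ∑ a ∈ B, v a = ∑ a ∈ A, v a :=
    (Finset.sum_subset hAB fun a ha hna => hv a ha hna).symm
  have h := Nat.multinomial_spec B v
  rw [h1, h2, ← Nat.multinomial_spec A v] at h
  exact Nat.eq_of_mul_eq_mul_left (Finset.prod_pos fun a _ => Nat.factorial_pos _) h

lemma multinomial_reindex {α β : Type*} [DecidableEq α] [DecidableEq β]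
    (σ : β → α) (B' : Finset β) (hinj : Set.InjOn σ B') (e : α → ℕ) :
    Nat.multinomial (B'.image σ) e = Nat.multinomial B' (fun b => e (σ b)) := by
  have h1 : ∏ a ∈ B'.image σ, (e a).factorial = ∏ b ∈ B', (e (σ b)).factorial :=
    Finset.prod_image fun x hx y hy h => hinj hx hy h
  have h2 : ∑ a ∈ B'.image σ, e a = ∑ b ∈ B', e (σ b) :=
    Finset.sum_image fun x hx y hy h => hinj hx hy h
  have h := Nat.multinomial_spec (B'.image σ) e
  rw [h1, h2, ← Nat.multinomial_spec B' (fun b => e (σ b))] at h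
  exact Nat.eq_of_mul_eq_mul_left (Finset.prod_pos fun a _ => Nat.factorial_pos _) h

lemma Aset_reindex {α β : Type*} [DecidableEq α] [DecidableEq β] (μ : ℕ → ℝ)
    (σ : β → α) (B' : Finset β) (hinj : Set.InjOn σ B') (r : ℕ) (g : α → ℕ) (g' : β → ℕ)
    (hg : ∀ b ∈ B', g (σ b) = g' b) :
    Aset μ (B'.image σ) r g = Aset μ B' r g' := by
  classical
  have psi_mem : ∀ (e' : β → ℕ) (b₀ : β), b₀ ∈ B' →
      (∑ b ∈ B', if σ b = σ b₀ then e' b else 0) = e' b₀ := by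
    intro e' b₀ hb₀
    rw [Finset.sum_eq_single_of_mem b₀ hb₀
      (fun b hb hne => if_neg (fun h => hne (hinj hb hb₀ h))), if_pos rfl]
  have psi_not : ∀ (e' : β → ℕ) (a : α), a ∉ B'.image σ →
      (∑ b ∈ B', if σ b = a then e' b else 0) = 0 := by
    intro e' a ha
    exact Finset.sum_eq_zero fun b hb =>
      if_neg (fun h => ha (Finset.mem_image.2 ⟨b, hb, h⟩))
  unfold Aset
  refine Finset.sum_nbij' (fun e => fun b => if b ∈ B' then e (σ b) else 0)
    (fun e' => fun a => ∑ b ∈ B', if σ b = a then e' b else 0) ?_ ?_ ?_ ?_ ?_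
  · intro e he
    rw [Finset.mem_piAntidiag] at he ⊢
    refine ⟨?_, fun b hb => by by_contra hbB; simp [hbB] at hb⟩
    have heq : (∑ b ∈ B', if b ∈ B' then e (σ b) else 0) = ∑ a ∈ B'.image σ, e a := by
      rw [Finset.sum_image (fun x hx y hy h => hinj hx hy h)]
      exact Finset.sum_congr rfl fun b hb => if_pos hb
    rw [heq]
    exact he.1
  · intro e' he'
    rw [Finset.mem_piAntidiag] at he' ⊢
    constructor
    · rw [Finset.sum_image (fun x hx y hy h => hinj hx hy h)]
      rw [← he'.1]
      exact Finset.sum_congr rfl fun b hb => psi_mem e' b hb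
    · intro a ha
      by_contra haB
      exact ha (psi_not e' a haB)
  · intro e he
    rw [Finset.mem_piAntidiag] at he
    funext a
    dsimp only
    by_cases haB : a ∈ B'.image σ
    · obtain ⟨b₀, hb₀, rfl⟩ := Finset.mem_image.1 haB
      rw [psi_mem _ b₀ hb₀, if_pos hb₀]
    · rw [psi_not _ a haB]
      by_contra hne
      exact haB (he.2 a fun h => hne h.symm)
  · intro e' he'
    rw [Finset.mem_piAntidiag] at he'
    funext b
    dsimp only
    by_cases hb : b ∈ B'
    · rw [if_pos hb, psi_mem e' b hb]
    · rw [if_neg hb]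
      by_contra hne
      exact hb (he'.2 b fun h => hne h.symm)
  · intro e he
    rw [Finset.mem_piAntidiag] at he
    have hm : Nat.multinomial (B'.image σ) e = Nat.multinomial B'
        (fun b => if b ∈ B' then e (σ b) else 0) := by
      rw [multinomial_reindex σ B' hinj e]
      exact Nat.multinomial_congr fun b hb => (if_pos hb).symm
    rw [hm]
    congr 1
    rw [Finset.prod_image (fun x hx y hy h => hinj hx hy h)]
    refine Finset.prod_congr rfl fun b hb => ?_
    dsimp only
    rw [if_pos hb, hg b hb]



lemma fallFac_add (x : ℝ) (k k' : ℕ) :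
    fallFac x (k + k') = fallFac x k * fallFac (x - (k : ℝ)) k' := by
  unfold fallFac
  rw [Finset.prod_range_add]
  congr 1
  refine Finset.prod_congr rfl fun t _ => ?_
  push_cast
  ring

lemma posTuples_eq_empty {k n : ℕ} (h : n < k) : posTuples k n = ∅ := by
  rw [Finset.eq_empty_iff_forall_notMem]
  intro l hl
  rw [posTuples, Finset.mem_filter, Finset.Nat.mem_antidiagonalTuple] at hl
  have : k ≤ ∑ t : Fin k, l t := by
    calc k = ∑ _t : Fin k, 1 := by simp
    _ ≤ ∑ t : Fin k, l t := Finset.sum_le_sum fun t _ => hl.2 t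
  omega

lemma alt_sum_choose (p : ℕ) :
    ∑ i ∈ Finset.range (p + 1), (p.choose i : ℝ) * (-1) ^ (p - i)
      = if p = 0 then 1 else 0 := by
  have h := add_pow (1 : ℝ) (-1) p
  simp only [one_pow, one_mul, add_neg_cancel] at h
  rw [zero_pow_eq] at h
  rw [h]
  refine Finset.sum_congr rfl fun i hi => ?_
  ring

lemma B2 (f : ℕ → ℝ) (K k : ℕ) :
    ∑ i ∈ Finset.range (K + 1), (K.choose i : ℝ) * (-1) ^ (K - i) * (i.choose k : ℝ) * f (i - k)
      = (K.choose k : ℝ) *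
        ∑ i ∈ Finset.range (K - k + 1), ((K - k).choose i : ℝ) * (-1) ^ (K - k - i) * f i := by
  rcases le_or_gt k K with h | h
  · have hsplit : K + 1 = k + (K - k + 1) := by omega
    rw [hsplit, Finset.sum_range_add, Finset.mul_sum]
    have h0 : ∑ i ∈ Finset.range k, (K.choose i : ℝ) * (-1) ^ (K - i) * (i.choose k : ℝ) * f (i - k) = 0 := by
      refine Finset.sum_eq_zero fun i hi => ?_
      rw [Finset.mem_range] at hi
      rw [Nat.choose_eq_zero_of_lt hi]
      simp
    rw [h0, zero_add]
    refine Finset.sum_congr rfl fun i hi => ?_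
    rw [Finset.mem_range] at hi
    have hik : k + i ≤ K := by omega
    have hcc : (K.choose (k + i) : ℝ) * ((k + i).choose k : ℝ)
        = (K.choose k : ℝ) * ((K - k).choose i : ℝ) := by
      have := Nat.choose_mul (n := K) (Nat.le_add_right k i)
      have h2 : k + i - k = i := by omega
      rw [h2] at this
      exact_mod_cast congrArg (Nat.cast : ℕ → ℝ) this
    have hsub : K - (k + i) = K - k - i := by omega
    have hsub2 : k + i - k = i := by omega
    rw [hsub, hsub2]
    calc (K.choose (k + i) : ℝ) * (-1) ^ (K - k - i) * ((k + i).choose k : ℝ) * f i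
        = ((K.choose (k + i) : ℝ) * ((k + i).choose k : ℝ)) * ((-1) ^ (K - k - i) * f i) := by ring
      _ = ((K.choose k : ℝ) * ((K - k).choose i : ℝ)) * ((-1) ^ (K - k - i) * f i) := by rw [hcc]
      _ = (K.choose k : ℝ) * (((K - k).choose i : ℝ) * (-1) ^ (K - k - i) * f i) := by ring
  · have h0 : ∀ i ∈ Finset.range (K + 1),
        (K.choose i : ℝ) * (-1) ^ (K - i) * (i.choose k : ℝ) * f (i - k) = 0 := by
      intro i hi
      rw [Finset.mem_range] at hi
      rw [Nat.choose_eq_zero_of_lt (by omega : i < k)]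
      simp
    rw [Finset.sum_eq_zero h0, Nat.choose_eq_zero_of_lt h]
    simp



/-- grouping a sum over `piAntidiag s n` by the support of the tuple. -/
lemma sum_piAntidiag_group (s : Finset ℕ) (n : ℕ) (F : (ℕ → ℕ) → ℝ) :
    ∑ v ∈ s.piAntidiag n, F v
      = ∑ A ∈ s.powerset, ∑ v ∈ (A.piAntidiag n).filter (fun v => ∀ a ∈ A, v a ≠ 0), F v := by
  classical
  rw [← Finset.sum_fiberwise_of_maps_to
    (g := fun v : ℕ → ℕ => s.filter (fun a => v a ≠ 0)) (t := s.powerset)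
    (fun v _ => Finset.mem_powerset.2 (Finset.filter_subset _ _))]
  refine Finset.sum_congr rfl fun A hA => ?_
  rw [Finset.mem_powerset] at hA
  refine Finset.sum_congr ?_ fun _ _ => rfl
  ext v
  simp only [Finset.mem_filter, Finset.mem_piAntidiag]
  constructor
  · rintro ⟨⟨h1, h2⟩, h3⟩
    have hsupp : ∀ a, v a ≠ 0 → a ∈ A := by
      intro a ha
      rw [← h3, Finset.mem_filter]
      exact ⟨h2 a ha, ha⟩
    refine ⟨⟨?_, hsupp⟩, ?_⟩
    · rw [← h1]
      refine Finset.sum_subset hA fun a has hnA => ?_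
      by_contra hva
      exact hnA (hsupp a hva)
    · intro a haA
      have := h3 ▸ haA
      exact (Finset.mem_filter.1 this).2
  · rintro ⟨⟨h1, h2⟩, h3⟩
    refine ⟨⟨?_, fun a ha => hA (h2 a ha)⟩, ?_⟩
    · rw [← h1]
      exact (Finset.sum_subset hA fun a has hnA => by
        by_contra hva
        exact hnA (h2 a hva)).symm
    · ext a
      rw [Finset.mem_filter]
      constructor
      · rintro ⟨_, hva⟩
        exact h2 a hva
      · intro haA
        exact ⟨hA haA, h3 a haA⟩

/-- converting a sum over positive tuples supported on `A` to a sum over `posTuples`. -/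
lemma sum_filtered_posTuples (A : Finset ℕ) (n : ℕ) (F : (ℕ → ℕ) → ℝ)
    (G : (Fin A.card → ℕ) → ℝ)
    (h : ∀ v ∈ (A.piAntidiag n).filter (fun v => ∀ a ∈ A, v a ≠ 0),
      F v = G (fun t => v (A.orderEmbOfFin rfl t))) :
    ∑ v ∈ (A.piAntidiag n).filter (fun v => ∀ a ∈ A, v a ≠ 0), F v
      = ∑ l ∈ posTuples A.card n, G l := by
  classical
  set k := A.card with hk
  set σ : Fin k → ℕ := fun t => A.orderEmbOfFin rfl t with hσ
  have hinj : Function.Injective σ := fun a b hab => (A.orderEmbOfFin rfl).injective hab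
  have hmem : ∀ t, σ t ∈ A := fun t => Finset.orderEmbOfFin_mem A rfl t
  have himage : Finset.image σ Finset.univ = A := by
    ext a
    simp only [Finset.mem_image, Finset.mem_univ, true_and]
    constructor
    · rintro ⟨t, rfl⟩; exact hmem t
    · intro ha
      have : a ∈ Set.range σ := by
        rw [hσ]
        have := Finset.range_orderEmbOfFin A (rfl : A.card = k)
        rw [show (fun t => (A.orderEmbOfFin rfl) t) = ⇑(A.orderEmbOfFin rfl) from rfl, this]
        exact ha
      obtain ⟨t, ht⟩ := this
      exact ⟨t, ht⟩
  have psi_mem : ∀ (l : Fin k → ℕ) (t₀ : Fin k),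
      (∑ t : Fin k, if σ t = σ t₀ then l t else 0) = l t₀ := by
    intro l t₀
    rw [Finset.sum_eq_single_of_mem t₀ (Finset.mem_univ t₀)
      (fun t _ hne => if_neg (fun hc => hne (hinj hc))), if_pos rfl]
  have psi_not : ∀ (l : Fin k → ℕ) (a : ℕ), a ∉ A →
      (∑ t : Fin k, if σ t = a then l t else 0) = 0 := by
    intro l a ha
    exact Finset.sum_eq_zero fun t _ => if_neg (fun (hc : σ t = a) => ha (hc ▸ hmem t))
  have hsum : ∀ v : ℕ → ℕ, (∑ t : Fin k, v (σ t)) = A.sum v := by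
    intro v
    calc (∑ t : Fin k, v (σ t)) = ∑ a ∈ Finset.image σ Finset.univ, v a :=
      (Finset.sum_image fun x _ y _ hxy => hinj hxy).symm
    _ = A.sum v := by rw [himage]
  refine Finset.sum_nbij' (fun v => fun t => v (σ t))
    (fun l => fun a => ∑ t : Fin k, if σ t = a then l t else 0) ?_ ?_ ?_ ?_ h
  · intro v hv
    rw [Finset.mem_filter, Finset.mem_piAntidiag] at hv
    rw [posTuples, Finset.mem_filter, Finset.Nat.mem_antidiagonalTuple]
    dsimp only
    constructor
    · rw [← hv.1.1]
      exact hsum v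
    · intro t
      exact Nat.pos_of_ne_zero (hv.2 (σ t) (hmem t))
  · intro l hl
    rw [posTuples, Finset.mem_filter, Finset.Nat.mem_antidiagonalTuple] at hl
    rw [Finset.mem_filter, Finset.mem_piAntidiag]
    dsimp only
    refine ⟨⟨?_, fun a ha => ?_⟩, fun a haA => ?_⟩
    · rw [← hsum (fun a => ∑ t : Fin k, if σ t = a then l t else 0), ← hl.1]
      exact Finset.sum_congr rfl fun t _ => psi_mem l t
    · by_contra haA
      exact ha (psi_not l a haA)
    · rw [← himage] at haA
      obtain ⟨t, _, rfl⟩ := Finset.mem_image.1 haA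
      rw [psi_mem l t]
      exact (hl.2 t).ne'
  · intro v hv
    rw [Finset.mem_filter, Finset.mem_piAntidiag] at hv
    funext a
    dsimp only
    by_cases haA : a ∈ A
    · rw [← himage] at haA
      obtain ⟨t, _, rfl⟩ := Finset.mem_image.1 haA
      exact psi_mem _ t
    · rw [psi_not _ a haA]
      by_contra hne
      exact haA (hv.1.2 a fun hc => hne hc.symm)
  · intro l hl
    funext t
    exact psi_mem (fun t => l t) t




lemma integral_prod_pow
    [IsProbabilityMeasure (volume : Measure Ω)]
    (Y : ℕ → Ω → ℝ) (Y₀ : Ω → ℝ)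
    (hMeas : ∀ i, Measurable (Y i))
    (hIndep : iIndepFun Y volume)
    (hId : ∀ i, IdentDistrib (Y i) Y₀ volume volume)
    (hInt : ∀ m : ℕ, Integrable fun ω => (Y₀ ω) ^ m)
    (e : ℕ → ℕ) (s : Finset ℕ) :
    Integrable (fun ω => ∏ a ∈ s, Y a ω ^ e a) volume ∧
    ∫ ω, ∏ a ∈ s, Y a ω ^ e a = ∏ a ∈ s, ∫ ω, Y₀ ω ^ e a := by
  classical
  have hZmeas : ∀ b, Measurable (fun ω => Y b ω ^ e b) :=
    fun b => (hMeas b).pow_const (e b)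
  have hZindep : iIndepFun (fun b ω => Y b ω ^ e b) volume :=
    hIndep.comp (fun b x => x ^ e b) (fun b => measurable_id.pow_const (e b))
  have hZid : ∀ b, IdentDistrib (fun ω => Y b ω ^ e b) (fun ω => Y₀ ω ^ e b) volume volume :=
    fun b => (hId b).comp (measurable_id.pow_const (e b))
  have hZint : ∀ b, Integrable (fun ω => Y b ω ^ e b) volume :=
    fun b => ((hZid b).integrable_iff).mpr (hInt (e b))
  induction s using Finset.cons_induction with
  | empty => simp
  | cons a s ha ih =>
    have hindep : IndepFun (fun ω => ∏ b ∈ s, Y b ω ^ e b) (fun ω => Y a ω ^ e a) volume := by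
      have h := hZindep.indepFun_finsetProd_of_notMem hZmeas ha
      rwa [Finset.prod_fn] at h
    have hInt1 : Integrable (fun ω => ∏ b ∈ s, Y b ω ^ e b) volume := ih.1
    constructor
    · have := hindep.symm.integrable_mul (hZint a) hInt1
      refine this.congr ?_
      filter_upwards with ω
      rw [Finset.prod_cons]
      rfl
    · have hmul := IndepFun.integral_fun_mul_eq_mul_integral hindep.symm
        (hZint a).aestronglyMeasurable hInt1.aestronglyMeasurable
      have : (fun ω => ∏ b ∈ cons a s ha, Y b ω ^ e b)
          = fun ω => (Y a ω ^ e a) * ∏ b ∈ s, Y b ω ^ e b := by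
        funext ω; rw [Finset.prod_cons]
      rw [this, Finset.prod_cons, ← ih.2, ← (hZid a).integral_eq]
      exact hmul




lemma integral_split
    [IsProbabilityMeasure (volume : Measure Ω)]
    (Y : ℕ → Ω → ℝ) (Y₀ : Ω → ℝ)
    (hMeas : ∀ i, Measurable (Y i))
    (hIndep : iIndepFun Y volume)
    (hId : ∀ i, IdentDistrib (Y i) Y₀ volume volume)
    (hInt : ∀ m : ℕ, Integrable fun ω => (Y₀ ω) ^ m)
    (B₁ B₂ : Finset ℕ) (hd : Disjoint B₁ B₂) (r₁ r₂ : ℕ) (g : ℕ → ℕ) :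
    Integrable (fun ω => (∑ a ∈ B₁, Y a ω) ^ r₁ *
        ((∑ a ∈ B₂, Y a ω) ^ r₂ * ∏ a ∈ B₂, Y a ω ^ g a)) volume ∧
    ∫ ω, (∑ a ∈ B₁, Y a ω) ^ r₁ * ((∑ a ∈ B₂, Y a ω) ^ r₂ * ∏ a ∈ B₂, Y a ω ^ g a)
      = Aset (fun r => ∫ ω, Y₀ ω ^ r) B₁ r₁ 0 * Aset (fun r => ∫ ω, Y₀ ω ^ r) B₂ r₂ g := by
  classical
  have hfun : (fun ω => (∑ a ∈ B₁, Y a ω) ^ r₁ *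
        ((∑ a ∈ B₂, Y a ω) ^ r₂ * ∏ a ∈ B₂, Y a ω ^ g a))
      = fun ω => ∑ u ∈ B₁.piAntidiag r₁, ∑ w ∈ B₂.piAntidiag r₂,
          ((Nat.multinomial B₁ u : ℝ) * (Nat.multinomial B₂ w : ℝ)) *
            ∏ a ∈ B₁ ∪ B₂, Y a ω ^ (if a ∈ B₁ then u a else w a + g a) := by
    funext ω
    rw [Finset.sum_pow_eq_sum_piAntidiag B₁ (fun a => Y a ω) r₁,
      Finset.sum_pow_eq_sum_piAntidiag B₂ (fun a => Y a ω) r₂, Finset.sum_mul]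
    refine Finset.sum_congr rfl fun u hu => ?_
    rw [Finset.sum_mul, Finset.mul_sum]
    refine Finset.sum_congr rfl fun w hw => ?_
    have hprod : ∏ a ∈ B₁ ∪ B₂, Y a ω ^ (if a ∈ B₁ then u a else w a + g a)
        = (∏ a ∈ B₁, Y a ω ^ u a) * ((∏ a ∈ B₂, Y a ω ^ w a) * ∏ a ∈ B₂, Y a ω ^ g a) := by
      have e1 : (∏ a ∈ B₁, Y a ω ^ (if a ∈ B₁ then u a else w a + g a))
          = ∏ a ∈ B₁, Y a ω ^ u a :=
        Finset.prod_congr rfl fun a ha => by rw [if_pos ha]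
      have e2 : (∏ a ∈ B₂, Y a ω ^ (if a ∈ B₁ then u a else w a + g a))
          = (∏ a ∈ B₂, Y a ω ^ w a) * ∏ a ∈ B₂, Y a ω ^ g a := by
        rw [← Finset.prod_mul_distrib]
        exact Finset.prod_congr rfl fun a ha =>
          by rw [if_neg (Finset.disjoint_right.1 hd ha), pow_add]
      rw [Finset.prod_union hd, e1, e2]
    rw [hprod]; ring
  constructor
  · rw [hfun]
    refine integrable_finset_sum _ fun u hu => integrable_finset_sum _ fun w hw => ?_
    exact ((integral_prod_pow Y Y₀ hMeas hIndep hId hInt _ _).1).const_mul _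
  · rw [hfun]
    rw [integral_finset_sum _ fun u hu => integrable_finset_sum _ fun w hw =>
      ((integral_prod_pow Y Y₀ hMeas hIndep hId hInt _ _).1).const_mul _]
    have step : ∀ u ∈ B₁.piAntidiag r₁,
        (∫ ω, ∑ w ∈ B₂.piAntidiag r₂,
          ((Nat.multinomial B₁ u : ℝ) * (Nat.multinomial B₂ w : ℝ)) *
            ∏ a ∈ B₁ ∪ B₂, Y a ω ^ (if a ∈ B₁ then u a else w a + g a))
        = ∑ w ∈ B₂.piAntidiag r₂,
          ((Nat.multinomial B₁ u : ℝ) * ∏ a ∈ B₁, (∫ ω, Y₀ ω ^ (u a + 0))) *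
          ((Nat.multinomial B₂ w : ℝ) * ∏ a ∈ B₂, (∫ ω, Y₀ ω ^ (w a + g a))) := by
      intro u hu
      rw [integral_finset_sum _ fun w hw =>
        ((integral_prod_pow Y Y₀ hMeas hIndep hId hInt _ _).1).const_mul _]
      refine Finset.sum_congr rfl fun w hw => ?_
      rw [integral_const_mul _ _, (integral_prod_pow Y Y₀ hMeas hIndep hId hInt _ _).2]
      rw [Finset.prod_union hd]
      have h1 : ∏ a ∈ B₁, (∫ ω, Y₀ ω ^ (if a ∈ B₁ then u a else w a + g a))
          = ∏ a ∈ B₁, (∫ ω, Y₀ ω ^ (u a + 0)) :=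
        Finset.prod_congr rfl fun a ha => by rw [if_pos ha, add_zero]
      have h2 : ∏ a ∈ B₂, (∫ ω, Y₀ ω ^ (if a ∈ B₁ then u a else w a + g a))
          = ∏ a ∈ B₂, (∫ ω, Y₀ ω ^ (w a + g a)) :=
        Finset.prod_congr rfl fun a ha =>
          by rw [if_neg (Finset.disjoint_right.1 hd ha)]
      rw [h1, h2]; ring
    rw [Finset.sum_congr rfl step, ← Finset.sum_mul_sum]
    rfl


lemma image_val_univ (k : ℕ) :
    Finset.image (Fin.val) (Finset.univ : Finset (Fin k)) = Finset.range k := by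
  ext a
  simp only [Finset.mem_image, Finset.mem_univ, true_and, Finset.mem_range]
  constructor
  · rintro ⟨t, rfl⟩; exact t.isLt
  · intro h; exact ⟨⟨a, h⟩, rfl⟩

lemma Aset_fin_card (μ : ℕ → ℝ) (B : Finset ℕ) (r : ℕ) :
    Aset μ B r 0 = Aset μ (Finset.univ : Finset (Fin B.card)) r 0 := by
  have himage : Finset.image (fun t : Fin B.card => B.orderEmbOfFin rfl t) Finset.univ = B := by
    ext a
    simp only [Finset.mem_image, Finset.mem_univ, true_and]
    constructor
    · rintro ⟨t, rfl⟩; exact Finset.orderEmbOfFin_mem B rfl t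
    · intro ha
      have : a ∈ Set.range (B.orderEmbOfFin (rfl : B.card = B.card)) := by
        rw [Finset.range_orderEmbOfFin]; exact ha
      obtain ⟨t, ht⟩ := this
      exact ⟨t, ht⟩
  have h := Aset_reindex μ (fun t : Fin B.card => B.orderEmbOfFin rfl t) Finset.univ
    (fun x _ y _ hxy => (B.orderEmbOfFin rfl).injective hxy) r 0 0 (fun _ _ => rfl)
  rw [himage] at h
  exact h

lemma Aset_card_eq (μ : ℕ → ℝ) (B B' : Finset ℕ) (h : B.card = B'.card) (r : ℕ) :
    Aset μ B r 0 = Aset μ B' r 0 := by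
  rw [Aset_fin_card μ B, Aset_fin_card μ B', h]

lemma Aset_empty_zero (μ : ℕ → ℝ) (g : ℕ → ℕ) : Aset μ (∅ : Finset ℕ) 0 g = 1 := by
  simp [Aset]

lemma E_eq_Aset
    [IsProbabilityMeasure (volume : Measure Ω)]
    (Y : ℕ → Ω → ℝ) (Y₀ : Ω → ℝ)
    (hMeas : ∀ i, Measurable (Y i))
    (hIndep : iIndepFun Y volume)
    (hId : ∀ i, IdentDistrib (Y i) Y₀ volume volume)
    (hInt : ∀ m : ℕ, Integrable fun ω => (Y₀ ω) ^ m)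
    (p r : ℕ) :
    ∫ ω, (S Y p ω) ^ r = Aset (fun s => ∫ ω, Y₀ ω ^ s) (Finset.range p) r 0 := by
  have h := (integral_split Y Y₀ hMeas hIndep hId hInt ∅ (Finset.range p)
    (Finset.disjoint_empty_left _) 0 r 0).2
  have hfun : (fun ω => (∑ a ∈ (∅ : Finset ℕ), Y a ω) ^ 0 *
      ((∑ a ∈ Finset.range p, Y a ω) ^ r * ∏ a ∈ Finset.range p, Y a ω ^ (0 : ℕ → ℕ) a))
      = fun ω => (S Y p ω) ^ r := by
    funext ω
    simp [S]
  rw [hfun] at h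
  rw [h, Aset_empty_zero, one_mul]

lemma A_eq_Aset
    [IsProbabilityMeasure (volume : Measure Ω)]
    (Y : ℕ → Ω → ℝ) (Y₀ : Ω → ℝ)
    (hMeas : ∀ i, Measurable (Y i))
    (hIndep : iIndepFun Y volume)
    (hId : ∀ i, IdentDistrib (Y i) Y₀ volume volume)
    (hInt : ∀ m : ℕ, Integrable fun ω => (Y₀ ω) ^ m)
    (k r : ℕ) (l : Fin k → ℕ) :
    ∫ ω, (S Y k ω) ^ r * ∏ t : Fin k, Y t ω ^ l t
      = Aset (fun s => ∫ ω, Y₀ ω ^ s) (Finset.univ : Finset (Fin k)) r l := by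
  set g : ℕ → ℕ := fun a => if h : a < k then l ⟨a, h⟩ else 0 with hg
  have h := (integral_split Y Y₀ hMeas hIndep hId hInt ∅ (Finset.range k)
    (Finset.disjoint_empty_left _) 0 r g).2
  have hfun : (fun ω => (∑ a ∈ (∅ : Finset ℕ), Y a ω) ^ 0 *
      ((∑ a ∈ Finset.range k, Y a ω) ^ r * ∏ a ∈ Finset.range k, Y a ω ^ g a))
      = fun ω => (S Y k ω) ^ r * ∏ t : Fin k, Y t ω ^ l t := by
    funext ω
    have hprod : (∏ a ∈ Finset.range k, Y a ω ^ g a) = ∏ t : Fin k, Y t ω ^ l t := by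
      rw [← Fin.prod_univ_eq_prod_range (fun a => Y a ω ^ g a) k]
      refine Finset.prod_congr rfl fun t _ => ?_
      have : g t.val = l t := by
        rw [hg]
        simp [t.isLt]
      rw [this]
    simp [S, hprod]
  rw [hfun] at h
  rw [h, Aset_empty_zero, one_mul]
  have himage := image_val_univ k
  have h2 := Aset_reindex (fun s => ∫ ω, Y₀ ω ^ s) (Fin.val : Fin k → ℕ) Finset.univ
    (fun x _ y _ hxy => Fin.val_injective hxy) r g l
    (fun t _ => by rw [hg]; simp [t.isLt])
  rw [himage] at h2
  exact h2

lemma orderEmb_image (B : Finset ℕ) :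
    Finset.image (fun t : Fin B.card => B.orderEmbOfFin rfl t) Finset.univ = B := by
  ext a
  simp only [Finset.mem_image, Finset.mem_univ, true_and]
  constructor
  · rintro ⟨t, rfl⟩; exact Finset.orderEmbOfFin_mem B rfl t
  · intro ha
    have : a ∈ Set.range (B.orderEmbOfFin (rfl : B.card = B.card)) := by
      rw [Finset.range_orderEmbOfFin]; exact ha
    obtain ⟨t, ht⟩ := this
    exact ⟨t, ht⟩

lemma K1
    [IsProbabilityMeasure (volume : Measure Ω)]
    (Y : ℕ → Ω → ℝ) (Y₀ : Ω → ℝ)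
    (hMeas : ∀ i, Measurable (Y i))
    (hIndep : iIndepFun Y volume)
    (hId : ∀ i, IdentDistrib (Y i) Y₀ volume volume)
    (hInt : ∀ m : ℕ, Integrable fun ω => (Y₀ ω) ^ m)
    (i m n : ℕ) :
    ∫ ω, (S Y i ω) ^ (m + n)
      = ∑ k ∈ Finset.range (n + 1), (i.choose k : ℝ) *
          ∑ l ∈ posTuples k n, (Nat.multinomial Finset.univ l : ℝ) *
            ∑ j ∈ Finset.range (m + 1), (m.choose j : ℝ) * (∫ ω, (S Y (i - k) ω) ^ j) *
              (∫ ω, (S Y k ω) ^ (m - j) * ∏ t : Fin k, Y t ω ^ l t) := by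
  classical
  set μY : ℕ → ℝ := fun s => ∫ ω, Y₀ ω ^ s with hμY
  set H : ℕ → ℝ := fun k => ∑ l ∈ posTuples k n, (Nat.multinomial Finset.univ l : ℝ) *
      ∑ j ∈ Finset.range (m + 1), (m.choose j : ℝ) * (∫ ω, (S Y (i - k) ω) ^ j) *
        (∫ ω, (S Y k ω) ^ (m - j) * ∏ t : Fin k, Y t ω ^ l t) with hH
  have int1 : ∀ v : ℕ → ℕ,
      Integrable (fun ω => (S Y i ω) ^ m * ∏ a ∈ Finset.range i, Y a ω ^ v a) volume := by
    intro v
    have h := (integral_split Y Y₀ hMeas hIndep hId hInt ∅ (Finset.range i)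
      (Finset.disjoint_empty_left _) 0 m v).1
    refine h.congr ?_
    filter_upwards with ω
    simp [S]
  -- Step 1: multinomial expansion of the `n`-part
  have step1 : ∫ ω, (S Y i ω) ^ (m + n)
      = ∑ v ∈ (Finset.range i).piAntidiag n, (Nat.multinomial (Finset.range i) v : ℝ) *
          ∫ ω, (S Y i ω) ^ m * ∏ a ∈ Finset.range i, Y a ω ^ v a := by
    have hfun : (fun ω => (S Y i ω) ^ (m + n))
        = fun ω => ∑ v ∈ (Finset.range i).piAntidiag n,
            (Nat.multinomial (Finset.range i) v : ℝ) *
              ((S Y i ω) ^ m * ∏ a ∈ Finset.range i, Y a ω ^ v a) := by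
      funext ω
      rw [pow_add]
      have hn : (S Y i ω) ^ n = ∑ v ∈ (Finset.range i).piAntidiag n,
          (Nat.multinomial (Finset.range i) v : ℝ) * ∏ a ∈ Finset.range i, Y a ω ^ v a := by
        simp only [S]
        rw [Finset.sum_pow_eq_sum_piAntidiag (Finset.range i) (fun a => Y a ω) n]
      rw [hn, Finset.mul_sum]
      exact Finset.sum_congr rfl fun v _ => by ring
    rw [hfun, integral_finset_sum _ (fun v hv => (int1 v).const_mul _)]
    exact Finset.sum_congr rfl fun v _ => integral_const_mul _ _
  -- Step 3 (pointwise on the support-grouped sum)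
  have step3 : ∀ A ∈ (Finset.range i).powerset,
      ∀ v ∈ (A.piAntidiag n).filter (fun v => ∀ a ∈ A, v a ≠ 0),
      (Nat.multinomial (Finset.range i) v : ℝ) *
          ∫ ω, (S Y i ω) ^ m * ∏ a ∈ Finset.range i, Y a ω ^ v a
        = (Nat.multinomial A v : ℝ) * ∑ j ∈ Finset.range (m + 1),
            (m.choose j : ℝ) * (∫ ω, (S Y (i - A.card) ω) ^ j) * Aset μY A (m - j) v := by
    intro A hA v hv
    rw [Finset.mem_powerset] at hA
    rw [Finset.mem_filter, Finset.mem_piAntidiag] at hv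
    have hsupp : ∀ a, v a ≠ 0 → a ∈ A := hv.1.2
    have hmult : Nat.multinomial (Finset.range i) v = Nat.multinomial A v :=
      multinomial_congr_subset A (Finset.range i) hA v
        (fun a _ hnA => by by_contra hva; exact hnA (hsupp a hva))
    have hfun2 : (fun ω => (S Y i ω) ^ m * ∏ a ∈ Finset.range i, Y a ω ^ v a)
        = fun ω => ∑ j ∈ Finset.range (m + 1), (m.choose j : ℝ) *
            ((∑ a ∈ Finset.range i \ A, Y a ω) ^ j *
              ((∑ a ∈ A, Y a ω) ^ (m - j) * ∏ a ∈ A, Y a ω ^ v a)) := by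
      funext ω
      have hS : S Y i ω = (∑ a ∈ Finset.range i \ A, Y a ω) + (∑ a ∈ A, Y a ω) := by
        simp only [S]
        exact (Finset.sum_sdiff hA).symm
      have hP : (∏ a ∈ Finset.range i, Y a ω ^ v a) = ∏ a ∈ A, Y a ω ^ v a := by
        refine (Finset.prod_subset hA fun a ha hnA => ?_).symm
        have hva : v a = 0 := by by_contra hva; exact hnA (hsupp a hva)
        rw [hva, pow_zero]
      rw [hS, hP, add_pow, Finset.sum_mul]
      exact Finset.sum_congr rfl fun j hj => by ring
    have hint2 : ∀ j, Integrable (fun ω => (∑ a ∈ Finset.range i \ A, Y a ω) ^ j *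
        ((∑ a ∈ A, Y a ω) ^ (m - j) * ∏ a ∈ A, Y a ω ^ v a)) volume := fun j =>
      (integral_split Y Y₀ hMeas hIndep hId hInt (Finset.range i \ A) A
        Finset.sdiff_disjoint j (m - j) v).1
    rw [hfun2, integral_finset_sum _ (fun j hj => (hint2 j).const_mul _)]
    rw [hmult]
    congr 1
    refine Finset.sum_congr rfl fun j hj => ?_
    rw [integral_const_mul, (integral_split Y Y₀ hMeas hIndep hId hInt (Finset.range i \ A) A
        Finset.sdiff_disjoint j (m - j) v).2]
    have hcard : (Finset.range i \ A).card = (Finset.range (i - A.card)).card := by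
      rw [Finset.card_sdiff_of_subset hA, Finset.card_range, Finset.card_range]
    have hE : Aset μY (Finset.range i \ A) j 0 = ∫ ω, (S Y (i - A.card) ω) ^ j := by
      rw [Aset_card_eq μY _ _ hcard,
        ← E_eq_Aset Y Y₀ hMeas hIndep hId hInt (i - A.card) j]
    rw [hE]
    ring
  -- Step 4: convert the inner filtered sums to sums over `posTuples`
  have step4 : ∀ A ∈ (Finset.range i).powerset,
      (∑ v ∈ (A.piAntidiag n).filter (fun v => ∀ a ∈ A, v a ≠ 0),
        (Nat.multinomial A v : ℝ) * ∑ j ∈ Finset.range (m + 1),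
          (m.choose j : ℝ) * (∫ ω, (S Y (i - A.card) ω) ^ j) * Aset μY A (m - j) v)
      = H A.card := by
    intro A hA
    simp only [hH]
    refine sum_filtered_posTuples A n _
      (fun l => (Nat.multinomial Finset.univ l : ℝ) * ∑ j ∈ Finset.range (m + 1),
        (m.choose j : ℝ) * (∫ ω, (S Y (i - A.card) ω) ^ j) *
          (∫ ω, (S Y A.card ω) ^ (m - j) * ∏ t : Fin A.card, Y t ω ^ l t)) ?_
    intro v hv
    rw [Finset.mem_filter, Finset.mem_piAntidiag] at hv
    set σ : Fin A.card → ℕ := fun t => A.orderEmbOfFin rfl t with hσ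
    have hinj : Set.InjOn σ ↑(Finset.univ : Finset (Fin A.card)) :=
      fun x _ y _ hxy => (A.orderEmbOfFin rfl).injective hxy
    have himage : Finset.image σ Finset.univ = A := orderEmb_image A
    have hmult2 : Nat.multinomial A v = Nat.multinomial Finset.univ (fun t => v (σ t)) := by
      have h := multinomial_reindex σ Finset.univ hinj v
      rw [himage] at h
      exact h
    have hAset : ∀ j, Aset μY A (m - j) v
        = Aset μY (Finset.univ : Finset (Fin A.card)) (m - j) (fun t => v (σ t)) := by
      intro j
      have h := Aset_reindex μY σ Finset.univ hinj (m - j) v (fun t => v (σ t))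
        (fun t _ => rfl)
      rw [himage] at h
      exact h
    rw [hmult2]
    congr 1
    refine Finset.sum_congr rfl fun j hj => ?_
    rw [hAset j, A_eq_Aset Y Y₀ hMeas hIndep hId hInt A.card (m - j) (fun t => v (σ t))]
  -- assemble
  rw [step1, sum_piAntidiag_group (Finset.range i) n]
  rw [Finset.sum_congr rfl fun A hA => Finset.sum_congr rfl fun v hv => step3 A hA v hv]
  rw [Finset.sum_congr rfl fun A hA => step4 A hA]
  rw [Finset.sum_powerset_apply_card H, Finset.card_range]
  have hrange : ∀ k ∈ Finset.range (i + n + 1), k ∉ Finset.range (i + 1) →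
      (i.choose k : ℝ) * H k = 0 := by
    intro k _ hk
    rw [Finset.mem_range, not_lt] at hk
    rw [Nat.choose_eq_zero_of_lt (by omega)]
    simp
  have hrange2 : ∀ k ∈ Finset.range (i + n + 1), k ∉ Finset.range (n + 1) →
      (i.choose k : ℝ) * H k = 0 := by
    intro k _ hk
    rw [Finset.mem_range, not_lt] at hk
    have : H k = 0 := by
      rw [hH]
      dsimp only
      rw [posTuples_eq_empty (by omega), Finset.sum_empty]
    rw [this, mul_zero]
  calc ∑ k ∈ Finset.range (i + 1), i.choose k • H k
      = ∑ k ∈ Finset.range (i + 1), (i.choose k : ℝ) * H k :=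
        Finset.sum_congr rfl fun k _ => nsmul_eq_mul _ _
    _ = ∑ k ∈ Finset.range (i + n + 1), (i.choose k : ℝ) * H k :=
        Finset.sum_subset (Finset.range_subset_range.2 (by omega)) hrange
    _ = ∑ k ∈ Finset.range (n + 1), (i.choose k : ℝ) * H k :=
        (Finset.sum_subset (Finset.range_subset_range.2 (by omega)) hrange2).symm
    _ = _ := Finset.sum_congr rfl fun k _ => by simp only [hH]

lemma stirling_vanish
    [IsProbabilityMeasure (volume : Measure Ω)]
    (Y : ℕ → Ω → ℝ) (Y₀ : Ω → ℝ)
    (hMeas : ∀ i, Measurable (Y i))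
    (hIndep : iIndepFun Y volume)
    (hId : ∀ i, IdentDistrib (Y i) Y₀ volume volume)
    (hInt : ∀ m : ℕ, Integrable fun ω => (Y₀ ω) ^ m)
    (j k' : ℕ) (h : j < k') : probStirling Y j k' = 0 := by
  classical
  set c : ℕ → ℝ := fun k => ∑ l ∈ posTuples k j, (Nat.multinomial Finset.univ l : ℝ) *
      ∑ j' ∈ Finset.range (0 + 1), ((0 : ℕ).choose j' : ℝ) * (∫ ω, (S Y ((j+1) - k) ω) ^ j') *
        (∫ ω, (S Y k ω) ^ (0 - j') * ∏ t : Fin k, Y t ω ^ l t) with hc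
  have hEc : ∀ i, ∫ ω, (S Y i ω) ^ j
      = ∑ k ∈ Finset.range (j + 1), (i.choose k : ℝ) * c k := by
    intro i
    have hK := K1 Y Y₀ hMeas hIndep hId hInt i 0 j
    rw [Nat.zero_add] at hK
    have hone : ∀ p : ℕ, (∫ ω, (S Y p ω) ^ (0 : ℕ)) = (1 : ℝ) := fun p => by simp
    rw [hK, hc]
    refine Finset.sum_congr rfl fun k hk => ?_
    norm_num [Finset.sum_range_one, hone]
  have hinner : ∀ k ∈ Finset.range (j + 1),
      (∑ i ∈ Finset.range (k' + 1),
        (k'.choose i : ℝ) * (-1) ^ (k' - i) * (i.choose k : ℝ)) = 0 := by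
    intro k hk
    rw [Finset.mem_range] at hk
    have hb := B2 (fun _ => (1 : ℝ)) k' k
    simp only [mul_one] at hb
    rw [hb, alt_sum_choose (k' - k), if_neg (by omega : ¬ k' - k = 0), mul_zero]
  unfold probStirling
  have e1 : (∑ i ∈ Finset.range (k' + 1),
      (k'.choose i : ℝ) * (-1) ^ (k' - i) * ∫ ω, (S Y i ω) ^ j) = 0 := by
    calc (∑ i ∈ Finset.range (k' + 1),
        (k'.choose i : ℝ) * (-1) ^ (k' - i) * ∫ ω, (S Y i ω) ^ j)
        = ∑ i ∈ Finset.range (k' + 1), ∑ k ∈ Finset.range (j + 1),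
            (k'.choose i : ℝ) * (-1) ^ (k' - i) * ((i.choose k : ℝ) * c k) := by
          refine Finset.sum_congr rfl fun i _ => ?_
          rw [hEc i, Finset.mul_sum]
      _ = ∑ k ∈ Finset.range (j + 1), ∑ i ∈ Finset.range (k' + 1),
            (k'.choose i : ℝ) * (-1) ^ (k' - i) * ((i.choose k : ℝ) * c k) :=
          Finset.sum_comm
      _ = ∑ k ∈ Finset.range (j + 1), c k * ∑ i ∈ Finset.range (k' + 1),
            (k'.choose i : ℝ) * (-1) ^ (k' - i) * (i.choose k : ℝ) := by
          refine Finset.sum_congr rfl fun k _ => ?_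
          rw [Finset.mul_sum]
          exact Finset.sum_congr rfl fun i _ => by ring
      _ = 0 := Finset.sum_eq_zero fun k hk => by rw [hinner k hk, mul_zero]
  rw [e1, mul_zero]

theorem probBivBell_recurrence
    [IsProbabilityMeasure (volume : Measure Ω)]
    (Y : ℕ → Ω → ℝ) (Y₀ : Ω → ℝ)
    (hMeas : ∀ i, Measurable (Y i))
    (hIndep : iIndepFun Y volume)
    (hId : ∀ i, IdentDistrib (Y i) Y₀ volume volume)
    (hInt : ∀ m : ℕ, Integrable fun ω => (Y₀ ω) ^ m)
    (m n : ℕ) (x y : ℝ) :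
    phiBiv Y (m + n) x y =
      ∑ k ∈ Finset.range (n + 1), ∑ j ∈ Finset.range (m + 1),
        (m.choose j : ℝ) * phiBiv Y j (x - (k : ℝ)) y * fallFac x k * y ^ k *
          ((k.factorial : ℝ))⁻¹ *
          ∑ l ∈ posTuples k n,
            (Nat.multinomial Finset.univ l : ℝ) *
              ∫ ω, (S Y k ω) ^ (m - j) * ∏ i : Fin k, (Y i ω) ^ (l i) := by
  classical
  set D : ℕ → ℕ → ℝ := fun k j => ∑ l ∈ posTuples k n,
      (Nat.multinomial Finset.univ l : ℝ) *
        ∫ ω, (S Y k ω) ^ (m - j) * ∏ i : Fin k, (Y i ω) ^ (l i) with hD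
  -- rewrite of the Stirling numbers using K1
  have keyK : ∀ K, probStirling Y (m + n) K
      = ∑ k ∈ Finset.range (n + 1), ∑ j ∈ Finset.range (m + 1),
          ((K.factorial : ℝ))⁻¹ * (K.choose k : ℝ) * ((K - k).factorial : ℝ) *
            (m.choose j : ℝ) * D k j * probStirling Y j (K - k) := by
    intro K
    have hstir : ∀ p j : ℕ, (∑ i ∈ Finset.range (p + 1),
        (p.choose i : ℝ) * (-1) ^ (p - i) * ∫ ω, (S Y i ω) ^ j)
        = (p.factorial : ℝ) * probStirling Y j p := by
      intro p j
      unfold probStirling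
      rw [← mul_assoc, mul_inv_cancel₀ (by exact_mod_cast p.factorial_ne_zero), one_mul]
    have hrearr : ∀ i k : ℕ, (∑ l ∈ posTuples k n, (Nat.multinomial Finset.univ l : ℝ) *
        ∑ j ∈ Finset.range (m + 1), (m.choose j : ℝ) * (∫ ω, (S Y (i - k) ω) ^ j) *
          (∫ ω, (S Y k ω) ^ (m - j) * ∏ t : Fin k, Y t ω ^ l t))
        = ∑ j ∈ Finset.range (m + 1),
            (m.choose j : ℝ) * (∫ ω, (S Y (i - k) ω) ^ j) * D k j := by
      intro i k
      calc (∑ l ∈ posTuples k n, (Nat.multinomial Finset.univ l : ℝ) *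
          ∑ j ∈ Finset.range (m + 1), (m.choose j : ℝ) * (∫ ω, (S Y (i - k) ω) ^ j) *
            (∫ ω, (S Y k ω) ^ (m - j) * ∏ t : Fin k, Y t ω ^ l t))
          = ∑ l ∈ posTuples k n, ∑ j ∈ Finset.range (m + 1),
              (Nat.multinomial Finset.univ l : ℝ) *
              ((m.choose j : ℝ) * (∫ ω, (S Y (i - k) ω) ^ j) *
                (∫ ω, (S Y k ω) ^ (m - j) * ∏ t : Fin k, Y t ω ^ l t)) := by
            exact Finset.sum_congr rfl fun l _ => Finset.mul_sum _ _ _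
        _ = ∑ j ∈ Finset.range (m + 1), ∑ l ∈ posTuples k n,
              (Nat.multinomial Finset.univ l : ℝ) *
              ((m.choose j : ℝ) * (∫ ω, (S Y (i - k) ω) ^ j) *
                (∫ ω, (S Y k ω) ^ (m - j) * ∏ t : Fin k, Y t ω ^ l t)) := Finset.sum_comm
        _ = ∑ j ∈ Finset.range (m + 1),
              (m.choose j : ℝ) * (∫ ω, (S Y (i - k) ω) ^ j) * D k j := by
            refine Finset.sum_congr rfl fun j _ => ?_
            rw [hD]
            dsimp only
            rw [Finset.mul_sum]
            exact Finset.sum_congr rfl fun l _ => by ring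
    have main : (∑ i ∈ Finset.range (K + 1),
        (K.choose i : ℝ) * (-1) ^ (K - i) * ∫ ω, (S Y i ω) ^ (m + n))
        = ∑ k ∈ Finset.range (n + 1), ∑ j ∈ Finset.range (m + 1),
            (K.choose k : ℝ) * ((K - k).factorial : ℝ) *
              (m.choose j : ℝ) * D k j * probStirling Y j (K - k) := by
     calc (∑ i ∈ Finset.range (K + 1),
         (K.choose i : ℝ) * (-1) ^ (K - i) * ∫ ω, (S Y i ω) ^ (m + n))
         = ∑ i ∈ Finset.range (K + 1), ∑ k ∈ Finset.range (n + 1),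
             (K.choose i : ℝ) * (-1) ^ (K - i) * ((i.choose k : ℝ) *
               ∑ j ∈ Finset.range (m + 1),
                 (m.choose j : ℝ) * (∫ ω, (S Y (i - k) ω) ^ j) * D k j) := by
           refine Finset.sum_congr rfl fun i _ => ?_
           rw [K1 Y Y₀ hMeas hIndep hId hInt i m n,
             Finset.sum_congr rfl fun k (_ : k ∈ Finset.range (n+1)) => by rw [hrearr i k],
             Finset.mul_sum]
       _ = ∑ k ∈ Finset.range (n + 1), ∑ i ∈ Finset.range (K + 1),
             (K.choose i : ℝ) * (-1) ^ (K - i) * ((i.choose k : ℝ) *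
               ∑ j ∈ Finset.range (m + 1),
                 (m.choose j : ℝ) * (∫ ω, (S Y (i - k) ω) ^ j) * D k j) := Finset.sum_comm
       _ = ∑ k ∈ Finset.range (n + 1), ∑ j ∈ Finset.range (m + 1),
             (m.choose j : ℝ) * D k j *
               ∑ i ∈ Finset.range (K + 1), (K.choose i : ℝ) * (-1) ^ (K - i) *
                 (i.choose k : ℝ) * (∫ ω, (S Y (i - k) ω) ^ j) := by
           refine Finset.sum_congr rfl fun k _ => ?_
           calc (∑ i ∈ Finset.range (K + 1),
               (K.choose i : ℝ) * (-1) ^ (K - i) * ((i.choose k : ℝ) *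
                 ∑ j ∈ Finset.range (m + 1),
                   (m.choose j : ℝ) * (∫ ω, (S Y (i - k) ω) ^ j) * D k j))
               = ∑ i ∈ Finset.range (K + 1), ∑ j ∈ Finset.range (m + 1),
                   (m.choose j : ℝ) * D k j * ((K.choose i : ℝ) * (-1) ^ (K - i) *
                     (i.choose k : ℝ) * (∫ ω, (S Y (i - k) ω) ^ j)) := by
                 refine Finset.sum_congr rfl fun i _ => ?_
                 rw [Finset.mul_sum, Finset.mul_sum]
                 exact Finset.sum_congr rfl fun j _ => by ring
             _ = ∑ j ∈ Finset.range (m + 1), ∑ i ∈ Finset.range (K + 1),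
                   (m.choose j : ℝ) * D k j * ((K.choose i : ℝ) * (-1) ^ (K - i) *
                     (i.choose k : ℝ) * (∫ ω, (S Y (i - k) ω) ^ j)) := Finset.sum_comm
             _ = ∑ j ∈ Finset.range (m + 1),
                   (m.choose j : ℝ) * D k j *
                     ∑ i ∈ Finset.range (K + 1), (K.choose i : ℝ) * (-1) ^ (K - i) *
                       (i.choose k : ℝ) * (∫ ω, (S Y (i - k) ω) ^ j) := by
                 exact Finset.sum_congr rfl fun j _ => (Finset.mul_sum _ _ _).symm
       _ = ∑ k ∈ Finset.range (n + 1), ∑ j ∈ Finset.range (m + 1),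
             (K.choose k : ℝ) * ((K - k).factorial : ℝ) *
               (m.choose j : ℝ) * D k j * probStirling Y j (K - k) := by
           refine Finset.sum_congr rfl fun k _ => Finset.sum_congr rfl fun j _ => ?_
           rw [B2 (fun p => ∫ ω, (S Y p ω) ^ j) K k, hstir (K - k) j]
           ring
    calc probStirling Y (m + n) K
        = ((K.factorial : ℝ))⁻¹ * ∑ i ∈ Finset.range (K + 1),
            (K.choose i : ℝ) * (-1) ^ (K - i) * ∫ ω, (S Y i ω) ^ (m + n) := rfl
      _ = ((K.factorial : ℝ))⁻¹ * ∑ k ∈ Finset.range (n + 1), ∑ j ∈ Finset.range (m + 1),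
            (K.choose k : ℝ) * ((K - k).factorial : ℝ) *
              (m.choose j : ℝ) * D k j * probStirling Y j (K - k) := by rw [main]
      _ = _ := by
          rw [Finset.mul_sum]
          refine Finset.sum_congr rfl fun k _ => ?_
          rw [Finset.mul_sum]
          exact Finset.sum_congr rfl fun j _ => by ring
  -- inner sum over K for fixed k, j
  have innerK : ∀ k ∈ Finset.range (n + 1), ∀ j ∈ Finset.range (m + 1),
      (∑ K ∈ Finset.range (m + n + 1),
        ((K.factorial : ℝ))⁻¹ * (K.choose k : ℝ) * ((K - k).factorial : ℝ) *
          (m.choose j : ℝ) * D k j * probStirling Y j (K - k) * (fallFac x K * y ^ K))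
      = (m.choose j : ℝ) * phiBiv Y j (x - (k : ℝ)) y * fallFac x k * y ^ k *
          ((k.factorial : ℝ))⁻¹ * D k j := by
    intro k hk j hj
    rw [Finset.mem_range] at hk hj
    rw [show m + n + 1 = k + (m + n + 1 - k) from by omega, Finset.sum_range_add]
    have hzero : (∑ K ∈ Finset.range k,
        ((K.factorial : ℝ))⁻¹ * (K.choose k : ℝ) * ((K - k).factorial : ℝ) *
          (m.choose j : ℝ) * D k j * probStirling Y j (K - k) * (fallFac x K * y ^ K)) = 0 := by
      refine Finset.sum_eq_zero fun K hK => ?_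
      rw [Finset.mem_range] at hK
      rw [Nat.choose_eq_zero_of_lt hK]
      simp
    rw [hzero, zero_add]
    have hterm : ∀ k' ∈ Finset.range (m + n + 1 - k),
        ((((k + k').factorial : ℝ))⁻¹ * ((k + k').choose k : ℝ) *
          (((k + k') - k).factorial : ℝ) * (m.choose j : ℝ) * D k j *
            probStirling Y j ((k + k') - k) * (fallFac x (k + k') * y ^ (k + k')))
        = ((m.choose j : ℝ) * fallFac x k * y ^ k * ((k.factorial : ℝ))⁻¹ * D k j) *
            (probStirling Y j k' * fallFac (x - (k : ℝ)) k' * y ^ k') := by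
      intro k' _
      have hsub : k + k' - k = k' := by omega
      have hfac : ((k + k').choose k : ℝ) * (k.factorial : ℝ) * (k'.factorial : ℝ)
          = ((k + k').factorial : ℝ) := by
        have h := Nat.choose_mul_factorial_mul_factorial (Nat.le_add_right k k')
        rw [Nat.add_sub_cancel_left] at h
        exact_mod_cast congrArg (Nat.cast : ℕ → ℝ) h
      have hne : ((k + k').factorial : ℝ) ≠ 0 := by exact_mod_cast (k + k').factorial_ne_zero
      have hne2 : (k.factorial : ℝ) ≠ 0 := by exact_mod_cast k.factorial_ne_zero
      have hcoef : (((k + k').factorial : ℝ))⁻¹ * ((k + k').choose k : ℝ) * (k'.factorial : ℝ)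
          = ((k.factorial : ℝ))⁻¹ := by
        field_simp
        linear_combination hfac
      rw [hsub, fallFac_add, pow_add, hcoef]
      ring
    rw [Finset.sum_congr rfl hterm, ← Finset.mul_sum]
    have htrunc : (∑ k' ∈ Finset.range (m + n + 1 - k),
        probStirling Y j k' * fallFac (x - (k : ℝ)) k' * y ^ k')
        = ∑ k' ∈ Finset.range (j + 1),
            probStirling Y j k' * fallFac (x - (k : ℝ)) k' * y ^ k' := by
      refine (Finset.sum_subset (Finset.range_subset_range.2 (by omega)) ?_).symm
      intro k' _ hk'
      rw [Finset.mem_range, not_lt] at hk'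
      rw [stirling_vanish Y Y₀ hMeas hIndep hId hInt j k' (by omega)]
      ring
    rw [htrunc]
    have hphi : (∑ k' ∈ Finset.range (j + 1),
        probStirling Y j k' * fallFac (x - (k : ℝ)) k' * y ^ k')
        = phiBiv Y j (x - (k : ℝ)) y := rfl
    rw [hphi]
    ring
  -- assemble everything
  calc phiBiv Y (m + n) x y
      = ∑ K ∈ Finset.range (m + n + 1),
          probStirling Y (m + n) K * fallFac x K * y ^ K := rfl
    _ = ∑ K ∈ Finset.range (m + n + 1), ∑ k ∈ Finset.range (n + 1), ∑ j ∈ Finset.range (m + 1),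
          ((K.factorial : ℝ))⁻¹ * (K.choose k : ℝ) * ((K - k).factorial : ℝ) *
            (m.choose j : ℝ) * D k j * probStirling Y j (K - k) * (fallFac x K * y ^ K) := by
        refine Finset.sum_congr rfl fun K _ => ?_
        rw [keyK K, Finset.sum_mul, Finset.sum_mul]
        refine Finset.sum_congr rfl fun k _ => ?_
        rw [Finset.sum_mul, Finset.sum_mul]
        exact Finset.sum_congr rfl fun j _ => by ring
    _ = ∑ k ∈ Finset.range (n + 1), ∑ K ∈ Finset.range (m + n + 1), ∑ j ∈ Finset.range (m + 1),
          ((K.factorial : ℝ))⁻¹ * (K.choose k : ℝ) * ((K - k).factorial : ℝ) *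
            (m.choose j : ℝ) * D k j * probStirling Y j (K - k) * (fallFac x K * y ^ K) :=
        Finset.sum_comm
    _ = ∑ k ∈ Finset.range (n + 1), ∑ j ∈ Finset.range (m + 1), ∑ K ∈ Finset.range (m + n + 1),
          ((K.factorial : ℝ))⁻¹ * (K.choose k : ℝ) * ((K - k).factorial : ℝ) *
            (m.choose j : ℝ) * D k j * probStirling Y j (K - k) * (fallFac x K * y ^ K) :=
        Finset.sum_congr rfl fun k _ => Finset.sum_comm
    _ = ∑ k ∈ Finset.range (n + 1), ∑ j ∈ Finset.range (m + 1),
          (m.choose j : ℝ) * phiBiv Y j (x - (k : ℝ)) y * fallFac x k * y ^ k *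
            ((k.factorial : ℝ))⁻¹ * D k j :=
        Finset.sum_congr rfl fun k hk => Finset.sum_congr rfl fun j hj => innerK k hk j hj
    _ = _ := by
        refine Finset.sum_congr rfl fun k _ => Finset.sum_congr rfl fun j _ => ?_
        simp only [hD]

end
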